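/- Let Δ, δ be real numbers with Δ ≥ δ ≥ 1 and α ≥ 0. Then α(Δ+δ) + √(α²(Δ−δ)² + 4Δ(1−α)²) = α(Δ+1) + √(α²(Δ+1)² + 4Δ(1−2α)) if and only if δ = 1 or α = 0 or α = 1. -/

import Mathlib

theorem stmt_2 (Δ δ α : ℝ) (h1 : Δ ≥ δ) (h2 : δ ≥ 1) (hα : α ≥ 0) :
    α * (Δ + δ) + Real.sqrt (α ^ 2 * (Δ - δ) ^ 2 + 4 * Δ * (1 - α) ^ 2) =
      α * (Δ + 1) + Real.sqrt (α ^ 2 * (Δ + 1) ^ 2 + 4 * Δ * (1 - 2 * α)) ↔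
    δ = 1 ∨ α = 0 ∨ α = 1 := by
  have hΔ1 : Δ ≥ 1 := le_trans h2 h1
  have hkey : α ^ 2 * (Δ + 1) ^ 2 + 4 * Δ * (1 - 2 * α)
      = α ^ 2 * (Δ - 1) ^ 2 + 4 * Δ * (1 - α) ^ 2 := by ring
  rw [hkey]
  set A := α ^ 2 * (Δ - δ) ^ 2 + 4 * Δ * (1 - α) ^ 2 with hA
  set B := α ^ 2 * (Δ - 1) ^ 2 + 4 * Δ * (1 - α) ^ 2 with hB
  have hAnn : A ≥ 0 := by positivity
  have hBnn : B ≥ 0 := by positivity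
  have hsA : (Real.sqrt A) ^ 2 = A := Real.sq_sqrt hAnn
  have hsB : (Real.sqrt B) ^ 2 = B := Real.sq_sqrt hBnn
  have hsAnn : Real.sqrt A ≥ 0 := Real.sqrt_nonneg _
  constructor
  · intro heq
    by_cases hδ : δ = 1
    · exact Or.inl hδ
    by_cases hα0 : α = 0
    · exact Or.inr (Or.inl hα0)
    right; right
    have hδ1 : δ > 1 := lt_of_le_of_ne h2 (Ne.symm hδ)
    have hαpos : α > 0 := lt_of_le_of_ne hα (Ne.symm hα0)
    have hsBeq : Real.sqrt B = α * (δ - 1) + Real.sqrt A := by linarith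
    have hBeq : B = (α * (δ - 1) + Real.sqrt A) ^ 2 := by
      rw [← hsBeq]; exact hsB.symm
    -- From this, 2 α (δ-1) √A = 2 α² (δ-1) (Δ-δ), so √A = α (Δ-δ)
    have hsq : Real.sqrt A = α * (Δ - δ) := by
      have h3 : 2 * (α * (δ - 1)) * Real.sqrt A = 2 * (α * (δ - 1)) * (α * (Δ - δ)) := by
        nlinarith [hsA, hBeq]
      have hpos : 2 * (α * (δ - 1)) > 0 := by nlinarith
      exact mul_left_cancel₀ (ne_of_gt hpos) h3
    have hA2 : A = α ^ 2 * (Δ - δ) ^ 2 := by rw [← hsA, hsq]; ring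
    have h4Δ : 4 * Δ * (1 - α) ^ 2 = 0 := by
      rw [hA] at hA2; linarith
    have : (1 - α) ^ 2 = 0 := by nlinarith
    have := pow_eq_zero_iff (n := 2) (by norm_num) |>.mp this
    linarith
  · rintro (hδ | hα0 | hα1)
    · subst hδ; ring_nf; rfl
    · subst hα0
      have hAB : A = B := by rw [hA, hB]; ring
      rw [hAB]; ring
    · rw [hα1]
      have hAe : Real.sqrt A = Δ - δ := by
        rw [hA, hα1]
        have : (1:ℝ) ^ 2 * (Δ - δ) ^ 2 + 4 * Δ * (1 - 1) ^ 2 = (Δ - δ) ^ 2 := by ring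
        rw [this, Real.sqrt_sq (by linarith)]
      have hBe : Real.sqrt B = Δ - 1 := by
        rw [hB, hα1]
        have : (1:ℝ) ^ 2 * (Δ - 1) ^ 2 + 4 * Δ * (1 - 1) ^ 2 = (Δ - 1) ^ 2 := by ring
        rw [this, Real.sqrt_sq (by linarith)]
      rw [hAe, hBe]; ring
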